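/- Let S_N be the star graph on N ≥ 2 vertices, with adjacency matrix A, orthonormal eigenbasis {u_k} with eigenvalues ε_k, and uniform overlaps w_k = (𝟙ᵀu_k)². Then (Σ_{k : ε_k < 0} w_k·|ε_k|) / (Σ_{k : ε_k > 0} ε_k) = N/2 − √(N−1), i.e. the star saturates the upper bound N/2 − √(N−1) valid for all connected graphs on N vertices. -/

import Mathlib

/-- The star graph on `Fin N`: the hub is the vertex `0` (i.e. the vertex with value `0`),
adjacent to every other vertex, and there are no other edges. -/
def starGraph (N : ℕ) : SimpleGraph (Fin N) where
  Adj i j := i ≠ j ∧ ((i : ℕ) = 0 ∨ (j : ℕ) = 0)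
  symm := by
    constructor
    intro i j h
    exact ⟨h.1.symm, h.2.symm⟩
  loopless := by
    constructor
    intro i h
    exact h.1 rfl

instance starGraphDecidableAdj (N : ℕ) : DecidableRel (starGraph N).Adj := fun i j =>
  inferInstanceAs (Decidable (i ≠ j ∧ ((i : ℕ) = 0 ∨ (j : ℕ) = 0)))

/-- For the star graph `S_N` on `N ≥ 2` vertices, with adjacency matrix
`A`, orthonormal eigenbasis `u k` with eigenvalues `ε k` and uniform overlaps
`w k = (𝟙ᵀ u k)²`, the ratio `(Σ_{ε_k<0} w_k |ε_k|) / (Σ_{ε_k>0} ε_k)` equals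
`N/2 - √(N-1)`, saturating the bound valid for all connected graphs on `N` vertices. -/
theorem stmt_6 {N : ℕ} (hN : 2 ≤ N)
    (u : Fin N → Fin N → ℝ) (ε : Fin N → ℝ)
    (horth : ∀ k l, (∑ i, u k i * u l i) = if k = l then (1 : ℝ) else 0)
    (heig : ∀ k, ((starGraph N).adjMatrix ℝ).mulVec (u k) = ε k • u k) :
    (∑ k ∈ Finset.univ.filter (fun k => ε k < 0), (∑ i, u k i) ^ 2 * |ε k|) /
        (∑ k ∈ Finset.univ.filter (fun k => 0 < ε k), ε k) =
      (N : ℝ) / 2 - Real.sqrt ((N : ℝ) - 1) := by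
  haveI : NeZero N := ⟨by omega⟩
  set d : ℝ := (N : ℝ) - 1 with hdef
  have hNR : (2:ℝ) ≤ (N:ℝ) := by exact_mod_cast hN
  have hd0 : 0 < d := by rw [hdef]; linarith
  set r : ℝ := Real.sqrt ((N : ℝ) - 1) with hrdef
  have hr2 : r ^ 2 = d := Real.sq_sqrt (by linarith)
  have hr0 : 0 < r := Real.sqrt_pos.mpr (by linarith)
  -- basic adjacency facts
  have hAdj0 : ∀ j : Fin N, j ≠ 0 → (starGraph N).Adj 0 j := by
    intro j hj
    exact ⟨fun h => hj h.symm, Or.inl (by simp)⟩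
  have hAdji : ∀ i : Fin N, i ≠ 0 → ∀ j, (starGraph N).Adj i j ↔ j = 0 := by
    intro i hi j
    constructor
    · rintro ⟨hne, h0 | h0⟩
      · exact absurd (Fin.ext (by simpa using h0)) hi
      · exact Fin.ext (by simpa using h0)
    · rintro rfl
      exact ((hAdj0 i hi).symm)
  -- cardinality of the non-hub set
  have hcard : ((({0}ᶜ : Finset (Fin N))).card : ℝ) = d := by
    rw [Finset.card_compl]
    simp only [Finset.card_singleton, Fintype.card_fin]
    rw [Nat.cast_sub (by omega), Nat.cast_one, hdef]
  -- splitting sums at the hub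
  have hsplit : ∀ f : Fin N → ℝ, (∑ i, f i) = f 0 + ∑ i ∈ ({0}ᶜ : Finset (Fin N)), f i :=
    fun f => Fintype.sum_eq_add_sum_compl 0 f
  -- eigen-equation at the hub
  have H1 : ∀ k, (∑ j ∈ ({0}ᶜ : Finset (Fin N)), u k j) = ε k * u k 0 := by
    intro k
    have h := congrFun (heig k) 0
    simp only [Matrix.mulVec, dotProduct, Pi.smul_apply, smul_eq_mul] at h
    rw [hsplit (fun j => (starGraph N).adjMatrix ℝ 0 j * u k j)] at h
    have e1 : (starGraph N).adjMatrix ℝ 0 0 * u k 0 = 0 := by simp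
    have e2 : ∀ j ∈ ({0}ᶜ : Finset (Fin N)),
        (starGraph N).adjMatrix ℝ 0 j * u k j = u k j := by
      intro j hj
      have hj0 : j ≠ 0 := by simpa using hj
      rw [SimpleGraph.adjMatrix_apply, if_pos (hAdj0 j hj0), one_mul]
    rw [e1, zero_add, Finset.sum_congr rfl e2] at h
    exact h
  -- eigen-equation away from the hub
  have H2 : ∀ k, ∀ i : Fin N, i ≠ 0 → u k 0 = ε k * u k i := by
    intro k i hi
    have h := congrFun (heig k) i
    simp only [Matrix.mulVec, dotProduct, Pi.smul_apply, smul_eq_mul] at h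
    have e2 : ∀ j : Fin N, (starGraph N).adjMatrix ℝ i j * u k j
        = if j = 0 then u k 0 else 0 := by
      intro j
      rw [SimpleGraph.adjMatrix_apply]
      by_cases hj : j = 0
      · rw [if_pos ((hAdji i hi j).mpr hj), if_pos hj, hj, one_mul]
      · rw [if_neg (fun hc => hj ((hAdji i hi j).mp hc)), if_neg hj, zero_mul]
    rw [Finset.sum_congr rfl (fun j _ => e2 j), Finset.sum_ite_eq' Finset.univ 0
      (fun _ => u k 0), if_pos (Finset.mem_univ _)] at h
    exact h
  -- nonzero index
  have i1 : Fin N := ⟨1, by omega⟩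
  have hi1 : (⟨1, by omega⟩ : Fin N) ≠ 0 := by
    intro h
    simpa using congrArg Fin.val h
  -- hub amplitude nonzero iff eigenvalue nonzero (given normalization)
  have hanz : ∀ k, ε k ≠ 0 → u k 0 ≠ 0 := by
    intro k hk h0
    have hz : ∀ i, u k i = 0 := by
      intro i
      by_cases hi : i = 0
      · rw [hi]; exact h0
      · have h := H2 k i hi
        rw [h0] at h
        exact (mul_eq_zero.mp h.symm).resolve_left hk
    have := horth k k
    simp [hz] at this
  have hzne : ∀ k, u k 0 ≠ 0 → ε k ≠ 0 := by
    intro k ha hz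
    have h := H2 k ⟨1, by omega⟩ hi1
    rw [hz, zero_mul] at h
    exact ha h
  -- key per-eigenvector facts
  have key : ∀ k, ε k ≠ 0 → ε k ^ 2 = d ∧ u k 0 ^ 2 = 1/2 ∧
      (∑ i, u k i) = u k 0 * (1 + ε k) := by
    intro k hk
    have ha := hanz k hk
    have hsum : ∀ i ∈ ({0}ᶜ : Finset (Fin N)), ε k * u k i = u k 0 := by
      intro i hi
      exact (H2 k i (by simpa using hi)).symm
    have h3 : ε k * (ε k * u k 0) = d * u k 0 := by
      have h := Finset.sum_congr rfl hsum
      rw [← Finset.mul_sum, H1 k, Finset.sum_const, nsmul_eq_mul, hcard] at h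
      exact h
    have heps2 : ε k ^ 2 = d := by
      have h4 : (ε k ^ 2) * u k 0 = d * u k 0 := by linear_combination h3
      exact mul_right_cancel₀ ha h4
    have h5 : ∀ i ∈ ({0}ᶜ : Finset (Fin N)),
        ε k ^ 2 * (u k i * u k i) = u k 0 * u k 0 := by
      intro i hi
      have h := H2 k i (by simpa using hi)
      rw [h]; ring
    have h6 : (∑ i ∈ ({0}ᶜ : Finset (Fin N)), u k i * u k i) = u k 0 * u k 0 := by
      have h := Finset.sum_congr rfl h5
      rw [← Finset.mul_sum, Finset.sum_const, nsmul_eq_mul, hcard, ← heps2] at h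
      exact mul_left_cancel₀ (pow_ne_zero 2 hk) h
    have hnorm := horth k k
    rw [if_pos rfl, hsplit (fun i => u k i * u k i), h6] at hnorm
    refine ⟨heps2, by nlinarith, ?_⟩
    rw [hsplit (fun i => u k i), H1 k]; ring
  -- uniqueness of eigenvectors for each nonzero eigenvalue
  have huniq : ∀ k l, ε k ≠ 0 → ε l = ε k → k = l := by
    intro k l hk hkl
    by_contra hne
    have h0 := horth k l
    rw [if_neg hne] at h0
    have hterm : ∀ i ∈ ({0}ᶜ : Finset (Fin N)),
        ε k ^ 2 * (u k i * u l i) = u k 0 * u l 0 := by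
      intro i hi
      have h1 := H2 k i (by simpa using hi)
      have h2 := H2 l i (by simpa using hi)
      rw [hkl] at h2
      rw [h1, h2]; ring
    have h6 : (∑ i ∈ ({0}ᶜ : Finset (Fin N)), u k i * u l i) = u k 0 * u l 0 := by
      have h := Finset.sum_congr rfl hterm
      rw [← Finset.mul_sum, Finset.sum_const, nsmul_eq_mul, hcard, ← (key k hk).1] at h
      exact mul_left_cancel₀ (pow_ne_zero 2 hk) h
    rw [hsplit (fun i => u k i * u l i), h6] at h0
    have hak := hanz k hk
    have hal := hanz l (hkl ▸ hk)
    have : u k 0 * u l 0 = 0 := by linarith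
    rcases mul_eq_zero.mp this with h | h
    · exact hak h
    · exact hal h
  -- completeness
  have hcomp : ∀ i j : Fin N, (∑ k, u k i * u k j) = if i = j then (1:ℝ) else 0 := by
    have h1 : (Matrix.of u) * (Matrix.of u).transpose = 1 := by
      ext k l
      simp only [Matrix.mul_apply, Matrix.transpose_apply, Matrix.of_apply,
        Matrix.one_apply]
      exact horth k l
    have h2 := mul_eq_one_comm.mp h1
    intro i j
    have h := congrFun (congrFun h2 i) j
    simpa only [Matrix.mul_apply, Matrix.transpose_apply, Matrix.of_apply,
      Matrix.one_apply] using h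
  -- existence of an eigenvector with eigenvalue t for t = ±r
  have hexist : ∀ t : ℝ, t ≠ 0 → t ^ 2 = d → ∃ k, ε k = t := by
    intro t ht ht2
    set v : Fin N → ℝ := fun j => if j = 0 then t else 1 with hv
    have hswap : (∑ k, u k 0 * (∑ j, u k j * v j))
        = ∑ j, (∑ k, u k 0 * u k j) * v j := by
      simp_rw [Finset.mul_sum, Finset.sum_mul]
      rw [Finset.sum_comm]
      apply Finset.sum_congr rfl
      intro j _
      apply Finset.sum_congr rfl
      intro k _
      ring
    have hval : (∑ j, (∑ k, u k 0 * u k j) * v j) = t := by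
      have e : ∀ j : Fin N, (∑ k, u k 0 * u k j) * v j = if j = 0 then t else 0 := by
        intro j
        rw [hcomp 0 j]
        by_cases hj : j = 0
        · subst hj; simp [hv]
        · rw [if_neg (fun h => hj h.symm), zero_mul, if_neg hj]
      rw [Finset.sum_congr rfl (fun j _ => e j),
        Finset.sum_ite_eq' Finset.univ 0 (fun _ => t), if_pos (Finset.mem_univ _)]
    have hne : (∑ k, u k 0 * (∑ j, u k j * v j)) ≠ 0 := by
      rw [hswap, hval]; exact ht
    obtain ⟨k, -, hk⟩ := Finset.exists_ne_zero_of_sum_ne_zero hne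
    -- compute the coefficient
    have hc : (∑ j, u k j * v j) = u k 0 * (t + ε k) := by
      rw [hsplit (fun j => u k j * v j)]
      have e2 : ∀ j ∈ ({0}ᶜ : Finset (Fin N)), u k j * v j = u k j := by
        intro j hj
        have hj0 : j ≠ 0 := by simpa using hj
        simp [hv, hj0]
      rw [Finset.sum_congr rfl e2, H1 k]
      simp [hv]; ring
    rw [hc] at hk
    have hak : u k 0 ≠ 0 := fun h => hk (by rw [h]; ring)
    have hek : ε k ≠ 0 := hzne k hak
    have heps2 := (key k hek).1
    have hsum : t + ε k ≠ 0 := fun h => hk (by rw [h]; ring)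
    refine ⟨k, ?_⟩
    have : (ε k - t) * (ε k + t) = 0 := by
      have : ε k ^ 2 = t ^ 2 := by rw [heps2, ht2]
      nlinarith
    rcases mul_eq_zero.mp this with h | h
    · linarith
    · exact absurd (by linarith) hsum
  obtain ⟨kp, hkp⟩ := hexist r hr0.ne' hr2
  obtain ⟨km, hkm⟩ := hexist (-r) (by simpa using hr0.ne') (by rw [neg_pow]; simp [hr2])
  -- identify the filters as singletons
  have hpos : Finset.univ.filter (fun k => 0 < ε k) = {kp} := by
    ext k
    simp only [Finset.mem_filter, Finset.mem_univ, true_and, Finset.mem_singleton]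
    constructor
    · intro hk
      have hek : ε k ≠ 0 := ne_of_gt hk
      have heps2 := (key k hek).1
      have hekr : ε k = r := by
        have : (ε k - r) * (ε k + r) = 0 := by nlinarith
        rcases mul_eq_zero.mp this with h | h
        · linarith
        · nlinarith
      exact huniq k kp hek (by rw [hkp, hekr])
    · rintro rfl
      rw [hkp]; exact hr0
  have hneg : Finset.univ.filter (fun k => ε k < 0) = {km} := by
    ext k
    simp only [Finset.mem_filter, Finset.mem_univ, true_and, Finset.mem_singleton]
    constructor
    · intro hk
      have hek : ε k ≠ 0 := ne_of_lt hk
      have heps2 := (key k hek).1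
      have hekr : ε k = -r := by
        have : (ε k - r) * (ε k + r) = 0 := by nlinarith
        rcases mul_eq_zero.mp this with h | h
        · nlinarith
        · linarith
      exact huniq k km hek (by rw [hkm, hekr])
    · rintro rfl
      rw [hkm]; linarith
  rw [hpos, hneg, Finset.sum_singleton, Finset.sum_singleton, hkp, hkm]
  have hekm : ε km ≠ 0 := by rw [hkm]; simpa using hr0.ne'
  obtain ⟨-, ha2, hsumval⟩ := key km hekm
  rw [hsumval, hkm, abs_neg, abs_of_pos hr0]
  rw [div_eq_iff hr0.ne']
  have expand : (u km 0 * (1 + -r)) ^ 2 = u km 0 ^ 2 * (1 - r) ^ 2 := by ring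
  rw [expand, ha2]
  linear_combination (r/2) * hr2 + (r/2) * hdef
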